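/- Let θ and A be real 2×2 matrices with Aθ = θA, and let ξ ∈ ℝ². For each s ∈ ℝ define φ_s : ℝ × ℝ² → ℝ × ℝ² by φ_s(t, v) = (t, e^{sA} v + Λ^θ_t (Λ^A_s ξ)). Then for every s ∈ ℝ and all (t₁, v₁), (t₂, v₂) ∈ ℝ × ℝ², one has φ_s((t₁, v₁) · (t₂, v₂)) = φ_s(t₁, v₁) · φ_s(t₂, v₂), i.e., each φ_s is a group endomorphism of G(θ). -/

import Mathlib

open Matrix

attribute [local instance] Matrix.linftyOpNormedAddCommGroup Matrix.linftyOpNormedRing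
  Matrix.linftyOpNormedAlgebra

lemma contExp (B : Matrix (Fin 2) (Fin 2) ℝ) (v : Fin 2 → ℝ) :
    Continuous fun r : ℝ => NormedSpace.exp (r • B) *ᵥ v := by
  have h : Continuous fun r : ℝ => NormedSpace.exp (r • B) :=
    NormedSpace.exp_continuous.comp (continuous_id.smul continuous_const)
  exact h.matrix_mulVec continuous_const

/-- `Λ^B_t v := ∫₀ᵗ e^{sB} v ds`. -/
noncomputable def Lam (B : Matrix (Fin 2) (Fin 2) ℝ) (t : ℝ) (v : Fin 2 → ℝ) : Fin 2 → ℝ :=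
  ∫ s in (0:ℝ)..t, (NormedSpace.exp (s • B)) *ᵥ v

lemma Lam_add (θ : Matrix (Fin 2) (Fin 2) ℝ) (t₁ t₂ : ℝ) (w : Fin 2 → ℝ) :
    Lam θ (t₁ + t₂) w = Lam θ t₁ w + NormedSpace.exp (t₁ • θ) *ᵥ Lam θ t₂ w := by
  have hint : ∀ a b : ℝ,
      IntervalIntegrable (fun r => NormedSpace.exp (r • θ) *ᵥ w) MeasureTheory.volume a b :=
    fun a b => (contExp θ w).intervalIntegrable a b
  unfold Lam
  rw [← intervalIntegral.integral_add_adjacent_intervals (hint 0 t₁) (hint t₁ (t₁ + t₂))]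
  congr 1
  have hsub : (∫ r in t₁..(t₁ + t₂), NormedSpace.exp (r • θ) *ᵥ w) =
      ∫ r in (0:ℝ)..t₂, NormedSpace.exp ((t₁ + r) • θ) *ᵥ w := by
    rw [intervalIntegral.integral_comp_add_left (fun r => NormedSpace.exp (r • θ) *ᵥ w) t₁,
      add_zero]
  rw [hsub]
  have hexp : ∀ r : ℝ, NormedSpace.exp ((t₁ + r) • θ) =
      NormedSpace.exp (t₁ • θ) * NormedSpace.exp (r • θ) := by
    intro r
    rw [add_smul]
    exact NormedSpace.exp_add_of_commute (((Commute.refl θ).smul_left t₁).smul_right r)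
  simp_rw [hexp, ← Matrix.mulVec_mulVec]
  set L : (Fin 2 → ℝ) →L[ℝ] (Fin 2 → ℝ) :=
    LinearMap.toContinuousLinearMap (Matrix.mulVecLin (NormedSpace.exp (t₁ • θ)))
  have : ∀ u : Fin 2 → ℝ, NormedSpace.exp (t₁ • θ) *ᵥ u = L u := fun u => rfl
  simp_rw [this]
  exact L.intervalIntegral_comp_comm (hint 0 t₂)

/-- The product of the group `G(θ) = ℝ ×_ρ ℝ²`:
`(t₁, v₁) · (t₂, v₂) = (t₁ + t₂, v₁ + e^{t₁θ} v₂)`. -/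
noncomputable def Gmul (θ : Matrix (Fin 2) (Fin 2) ℝ) (p q : ℝ × (Fin 2 → ℝ)) :
    ℝ × (Fin 2 → ℝ) :=
  (p.1 + q.1, p.2 + (NormedSpace.exp (p.1 • θ)) *ᵥ q.2)

/-- For `A` commuting with `θ` and `ξ ∈ ℝ²`, each map
`φ_s(t, v) = (t, e^{sA} v + Λ^θ_t (Λ^A_s ξ))` is a group endomorphism of `G(θ)`. -/
theorem phi_is_endomorphism (θ A : Matrix (Fin 2) (Fin 2) ℝ) (hcomm : A * θ = θ * A)
    (ξ : Fin 2 → ℝ) (φ : ℝ → ℝ × (Fin 2 → ℝ) → ℝ × (Fin 2 → ℝ))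
    (hφ : ∀ s t v, φ s (t, v) = (t, (NormedSpace.exp (s • A)) *ᵥ v + Lam θ t (Lam A s ξ))) :
    ∀ (s : ℝ) (p q : ℝ × (Fin 2 → ℝ)), φ s (Gmul θ p q) = Gmul θ (φ s p) (φ s q) := by
  rintro s ⟨t₁, v₁⟩ ⟨t₂, v₂⟩
  have hexpcomm : NormedSpace.exp (s • A) * NormedSpace.exp (t₁ • θ) =
      NormedSpace.exp (t₁ • θ) * NormedSpace.exp (s • A) := by
    have : Commute (s • A) (t₁ • θ) := (Commute.smul_left (Commute.smul_right hcomm t₁) s)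
    exact this.exp
  simp only [Gmul, hφ]
  refine Prod.ext rfl ?_
  simp only
  rw [Lam_add θ t₁ t₂ (Lam A s ξ), Matrix.mulVec_add, Matrix.mulVec_mulVec, hexpcomm,
    ← Matrix.mulVec_mulVec, Matrix.mulVec_add]
  abel
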